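/- Let A be an m-by-n real matrix with nonnegative entries. If A is TN_3 (resp. TP_3), then for every real number t ≥ 1 the Hadamard power A^{∘t} is TN_3 (resp. TP_3). -/

import Mathlib

/-- `A` is totally nonnegative of order `r`: every minor of size at most `r` is nonnegative. -/
def IsTNr {m n : ℕ} (A : Matrix (Fin m) (Fin n) ℝ) (r : ℕ) : Prop :=
  ∀ (k : ℕ), k ≤ r → ∀ (f : Fin k → Fin m) (g : Fin k → Fin n),
    StrictMono f → StrictMono g → 0 ≤ (A.submatrix f g).det

/-- `A` is totally positive of order `r`: every minor of size at most `r` is positive. -/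
def IsTPr {m n : ℕ} (A : Matrix (Fin m) (Fin n) ℝ) (r : ℕ) : Prop :=
  ∀ (k : ℕ), k ≤ r → ∀ (f : Fin k → Fin m) (g : Fin k → Fin n),
    StrictMono f → StrictMono g → 0 < (A.submatrix f g).det

/-- The contiguous `k`-by-`k` submatrix of `A` with rows `a, a+1, …, a+k-1`
and columns `b, b+1, …, b+k-1`. -/
def ctgSub {m n : ℕ} (A : Matrix (Fin m) (Fin n) ℝ) (k a b : ℕ)
    (ha : a + k ≤ m) (hb : b + k ≤ n) : Matrix (Fin k) (Fin k) ℝ :=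
  Matrix.of fun i j => A ⟨a + i.1, by omega⟩ ⟨b + j.1, by omega⟩

/-- `A` is a Hankel matrix: the entry `A i j` depends only on `i + j`. -/
def IsHankel {m n : ℕ} (A : Matrix (Fin m) (Fin n) ℝ) : Prop :=
  ∀ (i i' : Fin m) (j j' : Fin n), i.1 + j.1 = i'.1 + j'.1 → A i j = A i' j'

/-- The Hadamard (entrywise) power `A^{∘t}` with real exponent `t` (via `Real.rpow`). -/
noncomputable def hadPow {m n : ℕ} (A : Matrix (Fin m) (Fin n) ℝ) (t : ℝ) :
    Matrix (Fin m) (Fin n) ℝ :=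
  Matrix.of fun i j => (A i j) ^ t


section AuxHadamard
open Real Set

lemma karamata2 {D : Set ℝ} {f : ℝ → ℝ} (hf : ConvexOn ℝ D f) {a b d : ℝ}
    (haD : a ∈ D) (hdD : d ∈ D) (hab : a ≤ b) (hbd : b ≤ d) :
    f b + f (a + d - b) ≤ f a + f d := by
  rcases eq_or_lt_of_le (hab.trans hbd) with h | h
  · have hba : b = a := le_antisymm (by rw [h]; exact hbd) hab
    rw [hba, show a + d - a = d by ring]
  · set l := (d - b) / (d - a) with hl
    have hda : 0 < d - a := by linarith
    have hl0 : 0 ≤ l := div_nonneg (by linarith) hda.le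
    have hl1 : 0 ≤ 1 - l := by
      have : l ≤ 1 := by rw [hl, div_le_one hda]; linarith
      linarith
    have hb : l * a + (1 - l) * d = b := by
      have e : l * (d - a) = d - b := by rw [hl]; exact div_mul_cancel₀ _ hda.ne'
      linear_combination -e
    have hc : (1 - l) * a + l * d = a + d - b := by
      have e : l * (d - a) = d - b := by rw [hl]; exact div_mul_cancel₀ _ hda.ne'
      linear_combination e
    have h1 := hf.2 haD hdD hl0 hl1 (by ring)
    have h2 := hf.2 haD hdD hl1 hl0 (by ring)
    simp only [smul_eq_mul] at h1 h2
    rw [hb] at h1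
    rw [hc] at h2
    linarith

lemma rpow_karamata2 {t P Q R S : ℝ} (ht : 1 ≤ t) (hQ : 0 ≤ Q) (hR : 0 ≤ R) (hS : 0 ≤ S)
    (hQP : Q ≤ P) (hRP : R ≤ P) (hsum : Q + R ≤ P + S) :
    Q ^ t + R ^ t ≤ P ^ t + S ^ t := by
  have hP : 0 ≤ P := hQ.trans hQP
  have ht0 : (0:ℝ) < t := by linarith
  rcases le_or_gt (Q + R) P with h | h
  · have h1 := karamata2 (convexOn_rpow ht) (a := 0) (d := Q + R) (b := Q)
      (self_mem_Ici) (by simpa using add_nonneg hQ hR) hQ (by linarith)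
    simp only [zero_rpow ht0.ne', zero_add] at h1
    have h2 : (Q + R) ^ t ≤ P ^ t := rpow_le_rpow (by linarith) h ht0.le
    have h3 : 0 ≤ S ^ t := rpow_nonneg hS t
    calc Q ^ t + R ^ t ≤ Q ^ t + (Q + R - Q) ^ t := by simp
      _ ≤ (Q + R) ^ t := h1
      _ ≤ P ^ t + S ^ t := by linarith
  · have h1 := karamata2 (convexOn_rpow ht) (a := Q + R - P) (d := P) (b := Q)
      (by simp; linarith) (by simpa using hP) (by linarith) hQP
    have h2 : (Q + R - P) ^ t ≤ S ^ t := rpow_le_rpow (by linarith) (by linarith) ht0.le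
    have h3 : Q + R - P + P - Q = R := by ring
    rw [h3] at h1
    linarith

open Real Set

section K
variable {t : ℝ} (ht : 1 ≤ t)

private lemma upos (s : ℝ) : (0:ℝ) < 1 + Real.exp s := by positivity

include ht in
private lemma Fpos (s : ℝ) : 0 < (1 + Real.exp s) ^ t - 1 := by
  have h1 : (1:ℝ) < 1 + Real.exp s := by have := Real.exp_pos s; linarith
  have h2 : (1 + Real.exp s) ^ (1:ℝ) ≤ (1 + Real.exp s) ^ t :=
    Real.rpow_le_rpow_of_exponent_le h1.le ht
  rw [Real.rpow_one] at h2
  linarith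

include ht in
private lemma hasDerivF (s : ℝ) :
    HasDerivAt (fun s => (1 + Real.exp s) ^ t - 1)
      (t * (1 + Real.exp s) ^ (t - 1) * Real.exp s) s := by
  have h1 : HasDerivAt (fun s : ℝ => 1 + Real.exp s) (Real.exp s) s :=
    (Real.hasDerivAt_exp s).const_add 1
  have h2 : HasDerivAt (fun x : ℝ => x ^ t) (t * (1 + Real.exp s) ^ (t - 1))
      (1 + Real.exp s) := Real.hasDerivAt_rpow_const (Or.inl (upos s).ne')
  exact ((h2.comp s h1).sub_const 1)

include ht in
private lemma hasDerivK (s : ℝ) :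
    HasDerivAt (fun s => Real.log ((1 + Real.exp s) ^ t - 1))
      (t * (1 + Real.exp s) ^ (t - 1) * Real.exp s / ((1 + Real.exp s) ^ t - 1)) s :=
  (hasDerivF ht s).log (Fpos ht s).ne'

include ht in
private lemma hasDerivK' (s : ℝ) :
    HasDerivAt (fun s => t * (1 + Real.exp s) ^ (t - 1) * Real.exp s /
        ((1 + Real.exp s) ^ t - 1))
      (((t * ((t-1) * (1 + Real.exp s) ^ (t - 2) * Real.exp s) * Real.exp s
          + t * (1 + Real.exp s) ^ (t - 1) * Real.exp s) * ((1 + Real.exp s) ^ t - 1)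
        - (t * (1 + Real.exp s) ^ (t - 1) * Real.exp s)
            * (t * (1 + Real.exp s) ^ (t - 1) * Real.exp s))
        / ((1 + Real.exp s) ^ t - 1) ^ 2) s := by
  have h1 : HasDerivAt (fun s : ℝ => 1 + Real.exp s) (Real.exp s) s :=
    (Real.hasDerivAt_exp s).const_add 1
  have h2 : HasDerivAt (fun x : ℝ => x ^ (t-1)) ((t-1) * (1 + Real.exp s) ^ (t - 2))
      (1 + Real.exp s) := by
    have := Real.hasDerivAt_rpow_const (x := 1 + Real.exp s) (p := t - 1)
      (Or.inl (upos s).ne')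
    convert this using 2
    ring
  -- G = fun s => t * (1+exp s)^(t-1) * exp s
  have hG : HasDerivAt (fun s => t * (1 + Real.exp s) ^ (t - 1) * Real.exp s)
      (t * ((t-1) * (1 + Real.exp s) ^ (t - 2) * Real.exp s) * Real.exp s
        + t * (1 + Real.exp s) ^ (t - 1) * Real.exp s) s := by
    have h3 : HasDerivAt (fun s => t * (1 + Real.exp s) ^ (t - 1))
        (t * ((t-1) * (1 + Real.exp s) ^ (t - 2) * Real.exp s)) s := by
      have := (h2.comp s h1).const_mul t
      exact this
    have := h3.mul (Real.hasDerivAt_exp s)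
    exact this
  exact hG.div (hasDerivF ht s) (Fpos ht s).ne'

include ht in
lemma convexK : ConvexOn ℝ Set.univ
    (fun s => Real.log ((1 + Real.exp s) ^ t - 1)) := by
  have hdK : deriv (fun s => Real.log ((1 + Real.exp s) ^ t - 1))
      = fun s => t * (1 + Real.exp s) ^ (t - 1) * Real.exp s /
          ((1 + Real.exp s) ^ t - 1) := funext fun s => (hasDerivK ht s).deriv
  apply convexOn_of_deriv2_nonneg convex_univ
  · exact (Differentiable.continuous (fun s =>
      (hasDerivK ht s).differentiableAt)).continuousOn
  · exact fun s _ => ((hasDerivK ht s).differentiableAt).differentiableWithinAt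
  · intro s _
    rw [hdK]
    exact ((hasDerivK' ht s).differentiableAt).differentiableWithinAt
  · intro s _
    have hder2 : deriv^[2] (fun s => Real.log ((1 + Real.exp s) ^ t - 1)) s
        = deriv (fun s => t * (1 + Real.exp s) ^ (t - 1) * Real.exp s /
            ((1 + Real.exp s) ^ t - 1)) s := by
      simp only [Function.iterate_succ, Function.iterate_zero, Function.comp_apply, id_eq]
      rw [hdK]
    rw [hder2, (hasDerivK' ht s).deriv]
    -- now show the numerator is nonneg
    set v := Real.exp s with hv
    have hvpos : 0 < v := Real.exp_pos s
    set u := 1 + v with hu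
    have hupos : (0:ℝ) < u := by positivity
    apply div_nonneg _ (sq_nonneg _)
    set A := u ^ (t - 2) with hA
    have hApos : 0 < A := Real.rpow_pos_of_pos hupos _
    have h1 : u ^ (t - 1) = A * u := by
      rw [hA, show t - 1 = (t - 2) + 1 by ring, Real.rpow_add hupos, Real.rpow_one]
    have h2 : u ^ t = A * u ^ 2 := by
      rw [hA, show t = (t - 2) + 2 by ring, Real.rpow_add hupos]
      norm_num [Real.rpow_two]
    have hbern : 1 + t * v ≤ u ^ t := by
      have := one_add_mul_self_le_rpow_one_add (s := v) (by linarith) ht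
      convert this using 2 <;> rw [hu]
    rw [h1, h2] at *
    have key : 0 ≤ (t * A * v) * (A * (1+v)^2 - 1 - t*v) := by
      have h3 : A * (1+v)^2 = A * u^2 := by rw [hu]
      apply mul_nonneg (by positivity)
      rw [h3]; linarith
    rw [hu]
    calc (0:ℝ) ≤ (t * A * v) * (A * (1+v)^2 - 1 - t*v) := key
      _ = (t * ((t - 1) * A * v) * v + t * (A * (1+v)) * v) * (A * (1+v) ^ 2 - 1) -
          t * (A * (1+v)) * v * (t * (A * (1+v)) * v) := by ring
end K

lemma one_le_rpow' {x t : ℝ} (hx : 1 ≤ x) (ht : 0 ≤ t) : 1 ≤ x ^ t := by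
  calc (1:ℝ) = 1 ^ t := (Real.one_rpow t).symm
    _ ≤ x ^ t := Real.rpow_le_rpow zero_le_one hx ht

lemma one_lt_rpow' {x t : ℝ} (hx : 1 < x) (ht : 1 ≤ t) : 1 < x ^ t := by
  have h := Real.rpow_le_rpow_of_exponent_le hx.le ht
  rw [Real.rpow_one] at h
  linarith

/-- Core inequality, with `z ≤ y`. -/
lemma MIcore {t x y z w : ℝ} (ht : 1 ≤ t) (hx : 1 ≤ x) (hxz : x ≤ z) (hzy : z ≤ y)
    (hyw : y ≤ w) (hdet : (y-1)*(z-1) ≤ (x-1)*(w-1)) :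
    (y^t-1)*(z^t-1) ≤ (x^t-1)*(w^t-1) := by
  have ht0 : (0:ℝ) < t := by linarith
  rcases le_or_gt z 1 with hz1 | hz1
  · -- z = 1
    have hz : z = 1 := le_antisymm hz1 (hx.trans hxz)
    rw [hz, Real.one_rpow]
    simp only [sub_self, mul_zero]
    have h1 : 1 ≤ x ^ t := one_le_rpow' hx ht0.le
    have h2 : 1 ≤ w ^ t := one_le_rpow' (by linarith) ht0.le
    nlinarith
  · -- 1 < z ≤ y ≤ w, and x > 1
    have hy1 : 1 < y := lt_of_lt_of_le hz1 hzy
    have hw1 : 1 < w := lt_of_lt_of_le hy1 hyw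
    have hx1 : 1 < x := by nlinarith
    set w' : ℝ := 1 + (y-1)*(z-1)/(x-1) with hw'
    have hx1' : 0 < x - 1 := by linarith
    have hw'1 : 1 < w' := by
      rw [hw']
      have : 0 < (y-1)*(z-1)/(x-1) := div_pos (mul_pos (by linarith) (by linarith)) hx1'
      linarith
    have hw'w : w' ≤ w := by
      rw [hw', ← sub_nonneg]
      have h : w - 1 - (y-1)*(z-1)/(x-1) = ((x-1)*(w-1) - (y-1)*(z-1))/(x-1) := by
        field_simp
      have : 0 ≤ ((x-1)*(w-1) - (y-1)*(z-1))/(x-1) := by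
        apply div_nonneg (by linarith) hx1'.le
      linarith [h, this]
    have hyw' : y ≤ w' := by
      rw [hw', ← sub_nonneg]
      have h : 1 + (y-1)*(z-1)/(x-1) - y = ((y-1)*(z-1) - (y-1)*(x-1))/(x-1) := by
        field_simp; ring
      have : 0 ≤ ((y-1)*(z-1) - (y-1)*(x-1))/(x-1) := by
        apply div_nonneg (by nlinarith) hx1'.le
      linarith [h, this]
    have hprod : (x-1)*(w'-1) = (y-1)*(z-1) := by
      rw [hw']; field_simp; ring
    -- apply Karamata to K
    have hKval : ∀ u : ℝ, 1 < u →
        Real.log ((1 + Real.exp (Real.log (u-1))) ^ t - 1) = Real.log (u^t - 1) := by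
      intro u hu
      rw [Real.exp_log (by linarith)]
      norm_num
    have hkar := karamata2 (convexK ht) (a := Real.log (x-1)) (b := Real.log (z-1))
      (d := Real.log (w'-1)) (Set.mem_univ _) (Set.mem_univ _)
      (Real.log_le_log hx1' (by linarith)) (Real.log_le_log (by linarith) (by linarith))
    have hlog : Real.log (x-1) + Real.log (w'-1) - Real.log (z-1) = Real.log (y-1) := by
      have hxne : x - 1 ≠ 0 := hx1'.ne'
      have hwne : w' - 1 ≠ 0 := by intro h; rw [sub_eq_zero] at h; rw [← h] at hw'1; simp at hw'1
      have hzne : z - 1 ≠ 0 := by intro h; rw [sub_eq_zero] at h; rw [← h] at hz1; simp at hz1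
      rw [← Real.log_mul hxne hwne, ← Real.log_div (mul_ne_zero hxne hwne) hzne]
      congr 1
      rw [eq_comm, eq_div_iff hzne]
      linarith [hprod]
    rw [hlog, hKval x hx1, hKval z hz1, hKval y hy1, hKval w' hw'1] at hkar
    have px : (0:ℝ) < x^t - 1 := by have := one_lt_rpow' hx1 ht; linarith
    have py : (0:ℝ) < y^t - 1 := by have := one_lt_rpow' hy1 ht; linarith
    have pz : (0:ℝ) < z^t - 1 := by have := one_lt_rpow' hz1 ht; linarith
    have pw' : (0:ℝ) < w'^t - 1 := by have := one_lt_rpow' hw'1 ht; linarith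
    rw [← Real.log_mul pz.ne' py.ne', ← Real.log_mul px.ne' pw'.ne',
      Real.log_le_log_iff (by positivity) (by positivity)] at hkar
    have hfin : (x^t-1)*(w'^t-1) ≤ (x^t-1)*(w^t-1) := by
      apply mul_le_mul_of_nonneg_left _ px.le
      have := Real.rpow_le_rpow (by linarith : (0:ℝ) ≤ w') hw'w ht0.le
      linarith
    calc (y^t-1)*(z^t-1) = (z^t-1)*(y^t-1) := by ring
      _ ≤ (x^t-1)*(w'^t-1) := hkar
      _ ≤ (x^t-1)*(w^t-1) := hfin

/-- Main inequality, symmetric version. -/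
lemma MI {t x y z w : ℝ} (ht : 1 ≤ t) (hx : 1 ≤ x) (hxz : x ≤ z) (hxy : x ≤ y)
    (hzw : z ≤ w) (hyw : y ≤ w) (hdet : (y-1)*(z-1) ≤ (x-1)*(w-1)) :
    (y^t-1)*(z^t-1) ≤ (x^t-1)*(w^t-1) := by
  rcases le_total z y with h | h
  · exact MIcore ht hx hxz h hyw hdet
  · have := MIcore ht hx hxy h hzw (by nlinarith)
    linarith [this]

set_option maxHeartbeats 1000000 in
lemma det3_nonneg {t a b c d e f g h i : ℝ} (ht : 1 ≤ t)
    (ha : 0 ≤ a) (hb : 0 ≤ b) (hc : 0 ≤ c) (hd : 0 ≤ d) (he : 0 ≤ e)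
    (hf : 0 ≤ f) (hg : 0 ≤ g) (hh : 0 ≤ h) (hi : 0 ≤ i)
    (m11 : b*d ≤ a*e) (m12 : c*d ≤ a*f) (m13 : c*e ≤ b*f)
    (m21 : b*g ≤ a*h) (m22 : c*g ≤ a*i) (m23 : c*h ≤ b*i)
    (m31 : e*g ≤ d*h) (m32 : f*g ≤ d*i) (m33 : f*h ≤ e*i)
    (hdet : a*(f*h) + b*(d*i) + c*(e*g) ≤ a*(e*i) + b*(f*g) + c*(d*h)) :
    a^t*(f^t*h^t) + b^t*(d^t*i^t) + c^t*(e^t*g^t)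
      ≤ a^t*(e^t*i^t) + b^t*(f^t*g^t) + c^t*(d^t*h^t) := by
  have ht0 : (0:ℝ) < t := by linarith
  have pow0 : (0:ℝ)^t = 0 := Real.zero_rpow ht0.ne'
  have key2 : ∀ p q r s : ℝ, 0 ≤ p → 0 ≤ q → 0 ≤ r → 0 ≤ s → p*q ≤ r*s →
      p^t*q^t ≤ r^t*s^t := by
    intro p q r s hp hq hr hs hpq
    rw [← Real.mul_rpow hp hq, ← Real.mul_rpow hr hs]
    exact Real.rpow_le_rpow (mul_nonneg hp hq) hpq ht0.le
  have exp3 : ∀ p q r : ℝ, 0 ≤ p → 0 ≤ q → 0 ≤ r → (p*(q*r))^t = p^t*(q^t*r^t) := by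
    intro p q r hp hq hr
    rw [Real.mul_rpow hp (mul_nonneg hq hr), Real.mul_rpow hq hr]
  rcases eq_or_lt_of_le ha with ha0 | ha0
  · -- a = 0
    subst ha0
    simp only [zero_mul] at m11 m12 m21 m22
    rw [pow0]
    have hbd : b*d = 0 := le_antisymm m11 (mul_nonneg hb hd)
    have hcd : c*d = 0 := le_antisymm m12 (mul_nonneg hc hd)
    have hbg : b*g = 0 := le_antisymm m21 (mul_nonneg hb hg)
    have hcg : c*g = 0 := le_antisymm m22 (mul_nonneg hc hg)
    by_cases hb0 : b = 0
    · by_cases hc0 : c = 0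
      · subst hb0; subst hc0
        rw [pow0]
        simp only [zero_mul, add_zero, zero_add]
        positivity
      · have hd0 : d = 0 := by
          rcases mul_eq_zero.mp hcd with h' | h'
          · exact absurd h' hc0
          · exact h'
        have hg0 : g = 0 := by
          rcases mul_eq_zero.mp hcg with h' | h'
          · exact absurd h' hc0
          · exact h'
        subst hb0; subst hd0; subst hg0
        rw [pow0]
        simp only [zero_mul, mul_zero, add_zero, zero_add]
        positivity
    · have hd0 : d = 0 := by
        rcases mul_eq_zero.mp hbd with h' | h'
        · exact absurd h' hb0
        · exact h'
      have hg0 : g = 0 := by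
        rcases mul_eq_zero.mp hbg with h' | h'
        · exact absurd h' hb0
        · exact h'
      subst hd0; subst hg0
      rw [pow0]
      simp only [zero_mul, mul_zero, add_zero, zero_add]
      positivity
  · rcases eq_or_lt_of_le hd with hd0 | hd0
    · -- d = 0
      subst hd0
      simp only [mul_zero, zero_mul] at m31 m32
      rw [pow0]
      have heg : e*g = 0 := le_antisymm m31 (mul_nonneg he hg)
      have hfg : f*g = 0 := le_antisymm m32 (mul_nonneg hf hg)
      by_cases hg0 : g = 0
      · subst hg0
        rw [pow0]
        simp only [zero_mul, mul_zero, add_zero, zero_add]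
        have := mul_le_mul_of_nonneg_left (key2 f h e i hf hh he hi m33) (Real.rpow_nonneg ha t)
        linarith
      · have he0 : e = 0 := by
          rcases mul_eq_zero.mp heg with h' | h'
          · exact h'
          · exact absurd h' hg0
        have hf0 : f = 0 := by
          rcases mul_eq_zero.mp hfg with h' | h'
          · exact h'
          · exact absurd h' hg0
        subst he0; subst hf0
        rw [pow0]
        simp only [zero_mul, mul_zero, add_zero, zero_add]
        positivity
    · rcases eq_or_lt_of_le hg with hg0 | hg0
      · -- g = 0
        subst hg0
        rw [pow0]
        simp only [mul_zero, zero_mul, add_zero] at hdet ⊢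
        have hkar := rpow_karamata2 (P := a*(e*i)) (Q := a*(f*h)) (R := b*(d*i))
          (S := c*(d*h)) ht (by positivity) (by positivity) (by positivity)
          (mul_le_mul_of_nonneg_left m33 ha)
          (by calc b*(d*i) = b*d*i := by ring
                _ ≤ a*e*i := mul_le_mul_of_nonneg_right m11 hi
                _ = a*(e*i) := by ring)
          (by linarith)
        rw [exp3 a e i ha he hi, exp3 a f h ha hf hh, exp3 b d i hb hd hi,
          exp3 c d h hc hd hh] at hkar
        linarith
      · rcases eq_or_lt_of_le hb with hb0 | hb0
        · -- b = 0
          subst hb0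
          simp only [zero_mul] at m13 m23
          rw [pow0]
          have hce : c*e = 0 := le_antisymm m13 (mul_nonneg hc he)
          have hch : c*h = 0 := le_antisymm m23 (mul_nonneg hc hh)
          by_cases hc0 : c = 0
          · subst hc0
            rw [pow0]
            simp only [zero_mul, mul_zero, add_zero, zero_add]
            have := mul_le_mul_of_nonneg_left (key2 f h e i hf hh he hi m33) (Real.rpow_nonneg ha t)
            linarith
          · have he0 : e = 0 := by
              rcases mul_eq_zero.mp hce with h' | h'
              · exact absurd h' hc0
              · exact h'
            have hh0 : h = 0 := by
              rcases mul_eq_zero.mp hch with h' | h'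
              · exact absurd h' hc0
              · exact h'
            subst he0; subst hh0
            rw [pow0]
            simp only [zero_mul, mul_zero, add_zero, zero_add]
            positivity
        · rcases eq_or_lt_of_le hc with hc0 | hc0
          · -- c = 0
            subst hc0
            rw [pow0]
            simp only [zero_mul, mul_zero, add_zero] at hdet ⊢
            have hkar := rpow_karamata2 (P := a*(e*i)) (Q := a*(f*h)) (R := b*(d*i))
              (S := b*(f*g)) ht (by positivity) (by positivity) (by positivity)
              (mul_le_mul_of_nonneg_left m33 ha)
              (by calc b*(d*i) = b*d*i := by ring
                    _ ≤ a*e*i := mul_le_mul_of_nonneg_right m11 hi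
                    _ = a*(e*i) := by ring)
              (by linarith)
            rw [exp3 a e i ha he hi, exp3 a f h ha hf hh, exp3 b d i hb hd hi,
              exp3 b f g hb hf hg] at hkar
            linarith
          · -- all of a, b, c, d, g positive : main case
            have he0 : 0 < e := by nlinarith [mul_pos hb0 hd0]
            have hf0 : 0 < f := by nlinarith [mul_pos hc0 hd0]
            have hh0 : 0 < h := by nlinarith [mul_pos hb0 hg0]
            have hi0 : 0 < i := by nlinarith [mul_pos hc0 hg0]
            have key' : (a*f - c*d)*(a*h - b*g) ≤ (a*e - b*d)*(a*i - c*g) := by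
              nlinarith [mul_le_mul_of_nonneg_left hdet ha]
            have hdet' : (a*f/(c*d) - 1)*(a*h/(b*g) - 1) ≤ (a*e/(b*d) - 1)*(a*i/(c*g) - 1) := by
              rw [div_sub_one (by positivity), div_sub_one (by positivity),
                div_sub_one (by positivity), div_sub_one (by positivity),
                div_mul_div_comm, div_mul_div_comm,
                div_le_div_iff₀ (by positivity) (by positivity)]
              nlinarith [mul_le_mul_of_nonneg_right key' (show (0:ℝ) ≤ b*c*d*g by positivity)]
            have hMI := MI ht
              (x := a*e/(b*d)) (z := a*h/(b*g)) (y := a*f/(c*d)) (w := a*i/(c*g))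
              ((one_le_div (by positivity)).mpr m11)
              (by rw [div_le_div_iff₀ (by positivity) (by positivity)]
                  nlinarith [mul_le_mul_of_nonneg_left m31 (show (0:ℝ) ≤ a*b by positivity)])
              (by rw [div_le_div_iff₀ (by positivity) (by positivity)]
                  nlinarith [mul_le_mul_of_nonneg_left m13 (show (0:ℝ) ≤ a*d by positivity)])
              (by rw [div_le_div_iff₀ (by positivity) (by positivity)]
                  nlinarith [mul_le_mul_of_nonneg_left m23 (show (0:ℝ) ≤ a*g by positivity)])
              (by rw [div_le_div_iff₀ (by positivity) (by positivity)]
                  nlinarith [mul_le_mul_of_nonneg_left m32 (show (0:ℝ) ≤ a*c by positivity)])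
              hdet'
            have hxp : (a*e/(b*d))^t = (a^t*e^t)/(b^t*d^t) := by
              rw [Real.div_rpow (by positivity) (by positivity), Real.mul_rpow ha he,
                Real.mul_rpow hb hd]
            have hyp : (a*f/(c*d))^t = (a^t*f^t)/(c^t*d^t) := by
              rw [Real.div_rpow (by positivity) (by positivity), Real.mul_rpow ha hf,
                Real.mul_rpow hc hd]
            have hzp : (a*h/(b*g))^t = (a^t*h^t)/(b^t*g^t) := by
              rw [Real.div_rpow (by positivity) (by positivity), Real.mul_rpow ha hh,
                Real.mul_rpow hb hg]
            have hwp : (a*i/(c*g))^t = (a^t*i^t)/(c^t*g^t) := by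
              rw [Real.div_rpow (by positivity) (by positivity), Real.mul_rpow ha hi,
                Real.mul_rpow hc hg]
            rw [hxp, hyp, hzp, hwp] at hMI
            have pa : 0 < a^t := Real.rpow_pos_of_pos ha0 t
            have pb : 0 < b^t := Real.rpow_pos_of_pos hb0 t
            have pc : 0 < c^t := Real.rpow_pos_of_pos hc0 t
            have pd : 0 < d^t := Real.rpow_pos_of_pos hd0 t
            have pg : 0 < g^t := Real.rpow_pos_of_pos hg0 t
            rw [div_sub_one (by positivity), div_sub_one (by positivity),
              div_sub_one (by positivity), div_sub_one (by positivity),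
              div_mul_div_comm, div_mul_div_comm,
              div_le_div_iff₀ (by positivity) (by positivity)] at hMI
            have h2 : (b^t*d^t*(c^t*g^t)) = (c^t*d^t*(b^t*g^t)) := by ring
            rw [h2] at hMI
            have key'' : (a^t*f^t - c^t*d^t)*(a^t*h^t - b^t*g^t)
                ≤ (a^t*e^t - b^t*d^t)*(a^t*i^t - c^t*g^t) :=
              le_of_mul_le_mul_right hMI (by positivity)
            nlinarith [key'', pa]

lemma det3_pos {t a b c d e f g h i : ℝ} (ht : 1 ≤ t)
    (ha : 0 < a) (hb : 0 < b) (hc : 0 < c) (hd : 0 < d) (he : 0 < e)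
    (hf : 0 < f) (hg : 0 < g) (hh : 0 < h) (hi : 0 < i)
    (m11 : b*d < a*e) (m12 : c*d < a*f) (m13 : c*e < b*f)
    (m21 : b*g < a*h) (m22 : c*g < a*i) (m23 : c*h < b*i)
    (m31 : e*g < d*h) (m32 : f*g < d*i) (m33 : f*h < e*i)
    (hdet : a*(f*h) + b*(d*i) + c*(e*g) < a*(e*i) + b*(f*g) + c*(d*h)) :
    a^t*(f^t*h^t) + b^t*(d^t*i^t) + c^t*(e^t*g^t)
      < a^t*(e^t*i^t) + b^t*(f^t*g^t) + c^t*(d^t*h^t) := by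
  have ht0 : (0:ℝ) < t := lt_of_lt_of_le one_pos ht
  set D := a*(e*i) + b*(f*g) + c*(d*h) - (a*(f*h) + b*(d*i) + c*(e*g)) with hD
  have hDpos : 0 < D := by rw [hD]; linarith
  have hM : 0 < e*i - f*h := by linarith
  set a' := max (max (b*d/e) (c*d/f)) (max (max (b*g/h) (c*g/i)) (a - D/(e*i - f*h)))
    with ha'
  have hA1 : b*d/e ≤ a' := le_trans (le_max_left _ _) (le_max_left _ _)
  have hA2 : c*d/f ≤ a' := le_trans (le_max_right _ _) (le_max_left _ _)
  have hA3 : b*g/h ≤ a' :=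
    le_trans (le_trans (le_max_left _ _) (le_max_left _ _)) (le_max_right _ _)
  have hA4 : c*g/i ≤ a' :=
    le_trans (le_trans (le_max_right _ _) (le_max_left _ _)) (le_max_right _ _)
  have hA5 : a - D/(e*i - f*h) ≤ a' := le_trans (le_max_right _ _) (le_max_right _ _)
  have ha'a : a' < a := by
    rw [ha']
    apply max_lt (max_lt ((div_lt_iff₀ he).mpr m11) ((div_lt_iff₀ hf).mpr m12))
    apply max_lt (max_lt ((div_lt_iff₀ hh).mpr m21) ((div_lt_iff₀ hi).mpr m22))
    have : 0 < D/(e*i - f*h) := div_pos hDpos hM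
    linarith
  have ha'0 : 0 < a' := lt_of_lt_of_le (div_pos (mul_pos hb hd) he) hA1
  have hdet' : a'*(f*h) + b*(d*i) + c*(e*g) ≤ a'*(e*i) + b*(f*g) + c*(d*h) := by
    have h5 : (a - a') * (e*i - f*h) ≤ D := by
      have := sub_le_comm.mp hA5
      calc (a - a') * (e*i - f*h) ≤ (D/(e*i - f*h)) * (e*i - f*h) := by
            apply mul_le_mul_of_nonneg_right _ hM.le
            linarith [hA5]
        _ = D := by field_simp
    nlinarith [h5]
  have hbase := det3_nonneg ht ha'0.le hb.le hc.le hd.le he.le hf.le hg.le hh.le hi.le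
    ((div_le_iff₀ he).mp hA1) ((div_le_iff₀ hf).mp hA2) m13.le
    ((div_le_iff₀ hh).mp hA3) ((div_le_iff₀ hi).mp hA4) m23.le
    m31.le m32.le m33.le hdet'
  have pa : a'^t < a^t := Real.rpow_lt_rpow ha'0.le ha'a ht0
  have pM : f^t*h^t < e^t*i^t := by
    rw [← Real.mul_rpow hf.le hh.le, ← Real.mul_rpow he.le hi.le]
    exact Real.rpow_lt_rpow (mul_nonneg hf.le hh.le) m33 ht0
  nlinarith [hbase, mul_pos (sub_pos.mpr pa) (sub_pos.mpr pM)]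

lemma sm_one {α : Type*} [Preorder α] (v : Fin 1 → α) : StrictMono v := by
  intro x y hxy
  have hx := x.isLt
  have hy := y.isLt
  have := Fin.lt_def.mp hxy
  omega

end AuxHadamard

/-- Theorem 5.2. If `A` has nonnegative entries and is TN_3
(resp. TP_3), then `A^{∘t}` is TN_3 (resp. TP_3) for every real `t ≥ 1`. -/
theorem hadamard_power_TN3_TP3 {m n : ℕ} (A : Matrix (Fin m) (Fin n) ℝ)
    (h0 : ∀ i j, 0 ≤ A i j) (t : ℝ) (ht : 1 ≤ t) :
    (IsTNr A 3 → IsTNr (hadPow A t) 3) ∧ (IsTPr A 3 → IsTPr (hadPow A t) 3) := by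
  have ht0 : (0:ℝ) < t := lt_of_lt_of_le one_pos ht
  have e01 : StrictMono (![0, 1] : Fin 2 → Fin 3) := by decide
  have e02 : StrictMono (![0, 2] : Fin 2 → Fin 3) := by decide
  have e12 : StrictMono (![1, 2] : Fin 2 → Fin 3) := by decide
  constructor
  · intro hTN k hk f g hf hg
    interval_cases k
    · simp [Matrix.det_fin_zero]
    · rw [Matrix.det_fin_one]
      simp only [Matrix.submatrix_apply, hadPow, Matrix.of_apply]
      exact Real.rpow_nonneg (h0 _ _) t
    · rw [Matrix.det_fin_two]
      simp only [Matrix.submatrix_apply, hadPow, Matrix.of_apply]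
      have hm := hTN 2 (by norm_num) f g hf hg
      rw [Matrix.det_fin_two] at hm
      simp only [Matrix.submatrix_apply] at hm
      have key : (A (f 0) (g 1) * A (f 1) (g 0))^t ≤ (A (f 0) (g 0) * A (f 1) (g 1))^t :=
        Real.rpow_le_rpow (mul_nonneg (h0 _ _) (h0 _ _)) (by linarith) ht0.le
      rw [Real.mul_rpow (h0 _ _) (h0 _ _), Real.mul_rpow (h0 _ _) (h0 _ _)] at key
      linarith
    · -- k = 3
      have minor : ∀ (p q : Fin 2 → Fin 3), StrictMono p → StrictMono q →
          A (f (p 0)) (g (q 1)) * A (f (p 1)) (g (q 0))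
            ≤ A (f (p 0)) (g (q 0)) * A (f (p 1)) (g (q 1)) := by
        intro p q hp hq
        have := hTN 2 (by norm_num) (f ∘ p) (g ∘ q) (hf.comp hp) (hg.comp hq)
        rw [Matrix.det_fin_two] at this
        simp only [Matrix.submatrix_apply, Function.comp_apply] at this
        linarith
      have M11 := minor _ _ e01 e01
      have M12 := minor _ _ e01 e02
      have M13 := minor _ _ e01 e12
      have M21 := minor _ _ e02 e01
      have M22 := minor _ _ e02 e02
      have M23 := minor _ _ e02 e12
      have M31 := minor _ _ e12 e01
      have M32 := minor _ _ e12 e02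
      have M33 := minor _ _ e12 e12
      simp only [Matrix.cons_val_zero, Matrix.cons_val_one,
        Matrix.head_cons] at M11 M12 M13 M21 M22 M23 M31 M32 M33
      have hdet3 := hTN 3 le_rfl f g hf hg
      rw [Matrix.det_fin_three] at hdet3
      simp only [Matrix.submatrix_apply] at hdet3
      rw [Matrix.det_fin_three]
      simp only [Matrix.submatrix_apply, hadPow, Matrix.of_apply]
      have key := det3_nonneg (a := A (f 0) (g 0)) (b := A (f 0) (g 1)) (c := A (f 0) (g 2))
        (d := A (f 1) (g 0)) (e := A (f 1) (g 1)) (f := A (f 1) (g 2))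
        (g := A (f 2) (g 0)) (h := A (f 2) (g 1)) (i := A (f 2) (g 2)) ht
        (h0 _ _) (h0 _ _) (h0 _ _) (h0 _ _) (h0 _ _) (h0 _ _) (h0 _ _) (h0 _ _) (h0 _ _)
        M11 M12 M13 M21 M22 M23 M31 M32 M33 (by linarith)
      linarith
  · intro hTP k hk f g hf hg
    have hpos : ∀ i j, 0 < A i j := by
      intro i j
      have := hTP 1 (by norm_num) (fun _ => i) (fun _ => j) (sm_one _) (sm_one _)
      rwa [Matrix.det_fin_one, Matrix.submatrix_apply] at this
    interval_cases k
    · simp [Matrix.det_fin_zero]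
    · rw [Matrix.det_fin_one]
      simp only [Matrix.submatrix_apply, hadPow, Matrix.of_apply]
      exact Real.rpow_pos_of_pos (hpos _ _) t
    · rw [Matrix.det_fin_two]
      simp only [Matrix.submatrix_apply, hadPow, Matrix.of_apply]
      have hm := hTP 2 (by norm_num) f g hf hg
      rw [Matrix.det_fin_two] at hm
      simp only [Matrix.submatrix_apply] at hm
      have key : (A (f 0) (g 1) * A (f 1) (g 0))^t < (A (f 0) (g 0) * A (f 1) (g 1))^t :=
        Real.rpow_lt_rpow (mul_nonneg (h0 _ _) (h0 _ _)) (by linarith) ht0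
      rw [Real.mul_rpow (h0 _ _) (h0 _ _), Real.mul_rpow (h0 _ _) (h0 _ _)] at key
      linarith
    · -- k = 3
      have minor : ∀ (p q : Fin 2 → Fin 3), StrictMono p → StrictMono q →
          A (f (p 0)) (g (q 1)) * A (f (p 1)) (g (q 0))
            < A (f (p 0)) (g (q 0)) * A (f (p 1)) (g (q 1)) := by
        intro p q hp hq
        have := hTP 2 (by norm_num) (f ∘ p) (g ∘ q) (hf.comp hp) (hg.comp hq)
        rw [Matrix.det_fin_two] at this
        simp only [Matrix.submatrix_apply, Function.comp_apply] at this
        linarith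
      have M11 := minor _ _ e01 e01
      have M12 := minor _ _ e01 e02
      have M13 := minor _ _ e01 e12
      have M21 := minor _ _ e02 e01
      have M22 := minor _ _ e02 e02
      have M23 := minor _ _ e02 e12
      have M31 := minor _ _ e12 e01
      have M32 := minor _ _ e12 e02
      have M33 := minor _ _ e12 e12
      simp only [Matrix.cons_val_zero, Matrix.cons_val_one,
        Matrix.head_cons] at M11 M12 M13 M21 M22 M23 M31 M32 M33
      have hdet3 := hTP 3 le_rfl f g hf hg
      rw [Matrix.det_fin_three] at hdet3
      simp only [Matrix.submatrix_apply] at hdet3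
      rw [Matrix.det_fin_three]
      simp only [Matrix.submatrix_apply, hadPow, Matrix.of_apply]
      have key := det3_pos (a := A (f 0) (g 0)) (b := A (f 0) (g 1)) (c := A (f 0) (g 2))
        (d := A (f 1) (g 0)) (e := A (f 1) (g 1)) (f := A (f 1) (g 2))
        (g := A (f 2) (g 0)) (h := A (f 2) (g 1)) (i := A (f 2) (g 2)) ht
        (hpos _ _) (hpos _ _) (hpos _ _) (hpos _ _) (hpos _ _) (hpos _ _) (hpos _ _)
        (hpos _ _) (hpos _ _)
        M11 M12 M13 M21 M22 M23 M31 M32 M33 (by linarith)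
      linarith
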